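/- For every tree T with at least 2 vertices, β(T) ≤ (2/3)(|T| + L(T) − S(T)), where L(T) is the number of leaves and S(T) is the number of support vertices. -/

import Mathlib

open SimpleGraph Finset

private lemma uniq_nbr {V : Type*} [Fintype V] [DecidableEq V] {G : SimpleGraph V}
    [DecidableRel G.Adj] {u v w : V}
    (hu : G.degree u = 1) (h1 : G.Adj u v) (h2 : G.Adj u w) : v = w := by
  have hu' : (G.neighborFinset u).card = 1 := hu
  obtain ⟨a, ha⟩ := Finset.card_eq_one.mp hu'
  have hv : v ∈ G.neighborFinset u := by simpa using h1
  have hw : w ∈ G.neighborFinset u := by simpa using h2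
  rw [ha, Finset.mem_singleton] at hv hw
  rw [hv, hw]

private lemma exists_nbr {V : Type*} [Fintype V] [DecidableEq V] {G : SimpleGraph V}
    [DecidableRel G.Adj] (hc : G.Connected) (hn : 2 ≤ Fintype.card V) (v : V) :
    ∃ w, G.Adj v w := by
  obtain ⟨w, hw⟩ := Fintype.exists_ne_of_one_lt_card (by omega) v
  obtain ⟨p⟩ := hc.preconnected v w
  cases p with
  | nil => exact absurd rfl hw
  | cons h _ => exact ⟨_, h⟩

private lemma no_adj_leaves {V : Type*} [Fintype V] [DecidableEq V] {G : SimpleGraph V}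
    [DecidableRel G.Adj] (hc : G.Connected) (hn : 3 ≤ Fintype.card V) {u v : V}
    (hu : G.degree u = 1) (ha : G.Adj u v) (hv : G.degree v = 1) : False := by
  have H : ∀ (a x : V), G.Walk a x → (a = u ∨ a = v) → (x = u ∨ x = v) := by
    intro a x p
    induction p with
    | nil => exact id
    | cons h p ih =>
      rename_i b c _
      intro hb
      apply ih
      rcases hb with rfl | rfl
      · right; exact uniq_nbr hu h ha
      · left; exact uniq_nbr hv h ha.symm
  have hsub : (univ : Finset V) ⊆ {u, v} := by
    intro x _
    have := H u x (hc.preconnected u x).some (Or.inl rfl)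
    simpa using this
  have : Fintype.card V ≤ 2 := by
    calc Fintype.card V = (univ : Finset V).card := rfl
    _ ≤ ({u, v} : Finset V).card := Finset.card_le_card hsub
    _ ≤ 2 := Finset.card_insert_le _ _ |>.trans (by simp)
  omega

/-- For every tree `T` with at least 2 vertices,
`β(T) ≤ (2/3) (|T| + L(T) - S(T))`. -/
theorem stmt4 {V : Type*} [Fintype V] [DecidableEq V] (G : SimpleGraph V)
    [DecidableRel G.Adj] (hT : G.IsTree) (hn : 2 ≤ Fintype.card V)
    (s : Finset V) (hs : ∀ u ∈ s, ∀ w ∈ s, ¬ G.Adj u w) :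
    (3 : ℤ) * s.card ≤ 2 * ((Fintype.card V : ℤ)
        + (univ.filter (fun v => G.degree v = 1)).card
        - (univ.filter (fun v => ∃ u, G.Adj v u ∧ G.degree u = 1)).card) := by
  classical
  have hc := hT.isConnected
  set n := Fintype.card V with hn'
  set Lf : Finset V := univ.filter (fun v => G.degree v = 1) with hLf
  set Sp : Finset V := univ.filter (fun v => ∃ u, G.Adj v u ∧ G.degree u = 1) with hSp
  let g : V → V := fun v =>
    if h : ∃ u, G.Adj v u ∧ G.degree u = 1 then h.choose else v
  have hg : ∀ {v : V}, (∃ u, G.Adj v u ∧ G.degree u = 1) →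
      G.Adj v (g v) ∧ G.degree (g v) = 1 := by
    intro v h
    have hg' : g v = h.choose := dif_pos h
    rw [hg']
    exact h.choose_spec
  have hmemSp : ∀ {v : V}, v ∈ Sp → ∃ u, G.Adj v u ∧ G.degree u = 1 := by
    intro v hv
    exact (Finset.mem_filter.mp hv).2
  -- F1 : supports map injectively to leaves
  have hinjg : ∀ v ∈ Sp, ∀ w ∈ Sp, g v = g w → v = w := by
    intro v hv w hw he
    obtain ⟨hva, hvd⟩ := hg (hmemSp hv)
    obtain ⟨hwa, _⟩ := hg (hmemSp hw)
    rw [← he] at hwa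
    exact uniq_nbr hvd hva.symm hwa.symm
  have hSL : Sp.card ≤ Lf.card := by
    apply Finset.card_le_card_of_injOn g
    · intro v hv
      rw [hLf, Finset.mem_coe, Finset.mem_filter]
      exact ⟨Finset.mem_univ _, (hg (hmemSp hv)).2⟩
    · exact hinjg
  -- F2 : sum of degrees over s is at most n - 1
  have hedge : G.edgeFinset.card + 1 = Fintype.card V := hT.card_edgeFinset
  have hsum : ∑ v ∈ s, G.degree v ≤ G.edgeFinset.card := by
    have hcs : ∑ v ∈ s, G.degree v = (s.sigma fun v => G.neighborFinset v).card :=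
      (Finset.card_sigma _ _).symm
    rw [hcs]
    apply Finset.card_le_card_of_injOn (fun p => s(p.1, p.2))
    · rintro ⟨v, u⟩ hp
      rw [Finset.mem_coe, Finset.mem_sigma] at hp
      rw [Finset.mem_coe, SimpleGraph.mem_edgeFinset]
      exact (SimpleGraph.mem_neighborFinset _ _ _).mp hp.2
    · rintro ⟨v, u⟩ hp ⟨v', u'⟩ hp' he
      simp only [Finset.mem_coe, Finset.mem_sigma] at hp hp'
      have hadj : G.Adj v u := (SimpleGraph.mem_neighborFinset _ _ _).mp hp.2
      rcases Sym2.eq_iff.mp he with ⟨rfl, rfl⟩ | ⟨rfl, rfl⟩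
      · rfl
      · exact absurd hadj (hs _ hp.1 _ hp'.1)
  have hsplit : (s.filter (· ∈ Lf)).card + (s.filter (fun v => ¬ v ∈ Lf)).card = s.card :=
    Finset.card_filter_add_card_filter_not _
  have hk : (s.filter (· ∈ Lf)).card ≤ Lf.card :=
    Finset.card_le_card (fun x hx => (Finset.mem_filter.mp hx).2)
  have hlb : (s.filter (· ∈ Lf)).card + 2 * (s.filter (fun v => ¬ v ∈ Lf)).card
      ≤ ∑ v ∈ s, G.degree v := by
    calc (s.filter (· ∈ Lf)).card + 2 * (s.filter (fun v => ¬ v ∈ Lf)).card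
        = ∑ v ∈ s, (if v ∈ Lf then 1 else 2) := by
          rw [Finset.sum_ite, Finset.sum_const, Finset.sum_const]
          simp [mul_comm]
      _ ≤ ∑ v ∈ s, G.degree v := by
          apply Finset.sum_le_sum
          intro v _
          by_cases hvL : v ∈ Lf
          · rw [if_pos hvL]
            have : G.degree v = 1 := (Finset.mem_filter.mp hvL).2
            omega
          · rw [if_neg hvL]
            have h1 : G.degree v ≠ 1 := by
              intro h
              exact hvL (Finset.mem_filter.mpr ⟨Finset.mem_univ _, h⟩)
            have h2 : 0 < G.degree v :=
              (G.degree_pos_iff_exists_adj v).mpr (exists_nbr hc hn v)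
            omega
  have hmain : (s.filter (· ∈ Lf)).card + 2 * (s.filter (fun v => ¬ v ∈ Lf)).card
      ≤ G.edgeFinset.card := hlb.trans hsum
  by_cases h3 : 3 ≤ n
  · -- F3 : supports map injectively into the complement of s
    have key : Sp.card ≤ (univ \ s).card := by
      apply Finset.card_le_card_of_injOn (fun v => if v ∈ s then g v else v)
      · intro v hv
        rw [Finset.mem_coe, Finset.mem_sdiff]
        refine ⟨Finset.mem_univ _, ?_⟩
        beta_reduce
        by_cases hvs : v ∈ s
        · rw [if_pos hvs]
          intro hgs
          exact hs v hvs (g v) hgs (hg (hmemSp hv)).1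
        · rw [if_neg hvs]; exact hvs
      · intro v hv w hw he
        simp only at he
        by_cases hvs : v ∈ s <;> by_cases hws : w ∈ s
        · rw [if_pos hvs, if_pos hws] at he
          exact hinjg v hv w hw he
        · rw [if_pos hvs, if_neg hws] at he
          obtain ⟨hva, hvd⟩ := hg (hmemSp hv)
          obtain ⟨u', hwa, hud⟩ := hmemSp hw
          rw [he] at hvd
          exact (no_adj_leaves hc h3 hvd hwa hud).elim
        · rw [if_neg hvs, if_pos hws] at he
          obtain ⟨hwa, hwd⟩ := hg (hmemSp hw)
          obtain ⟨u', hva, hud⟩ := hmemSp hv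
          rw [← he] at hwd
          exact (no_adj_leaves hc h3 hwd hva hud).elim
        · rw [if_neg hvs, if_neg hws] at he
          exact he
    rw [Finset.card_sdiff_of_subset (Finset.subset_univ s), Finset.card_univ, ← hn'] at key
    have hsn : s.card ≤ n := by
      rw [hn']; exact Finset.card_le_univ s
    omega
  · have hn2 : n = 2 := by omega
    have hcard1 : s.card ≤ 1 := by
      by_contra hcon
      obtain ⟨u, hu, v, hv, huv⟩ := Finset.one_lt_card.mp (by omega)
      have huniv : ({u, v} : Finset V) = univ := by
        apply Finset.eq_univ_of_card
        rw [Finset.card_insert_of_notMem (by simp [huv]), Finset.card_singleton, ← hn', hn2]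
      obtain ⟨p⟩ := hc.preconnected u v
      cases p with
      | nil => exact huv rfl
      | @cons _ b _ h p =>
        have hb : b = v := by
          have : b ∈ ({u, v} : Finset V) := huniv ▸ Finset.mem_univ b
          rcases Finset.mem_insert.mp this with rfl | hbv
          · exact absurd h (G.irrefl)
          · exact Finset.mem_singleton.mp hbv
        exact hs u hu v hv (hb ▸ h)
    omega
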